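/- Let T' be a finite tree containing a vertex v that has two distinct neighbors a and b each of degree 1 in T', and let T be the tree obtained from T' by adding a new vertex u and the edge vu. Then γ₂(T) = γ₂(T') + 1 and α₂(T) = α₂(T') + 1; in particular α₂(T) − γ₂(T) = α₂(T') − γ₂(T'). -/

import Mathlib

open SimpleGraph

/-- `S` is a `k`-dominating set of the subgraph of `G` induced by `U`:
`S ⊆ U` and every vertex of `U` not in `S` has at least `k` neighbors in `S`. -/
def IsKDomOn {V : Type*} (G : SimpleGraph V) (k : ℕ) (U S : Set V) : Prop :=
  S ⊆ U ∧ ∀ v ∈ U, v ∉ S → k ≤ (G.neighborSet v ∩ S).ncard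

/-- `S` is a `k`-independent set of the subgraph of `G` induced by `U`:
`S ⊆ U` and every vertex of `S` has at most `k - 1` neighbors in `S`. -/
def IsKIndOn {V : Type*} (G : SimpleGraph V) (k : ℕ) (U S : Set V) : Prop :=
  S ⊆ U ∧ ∀ v ∈ S, (G.neighborSet v ∩ S).ncard ≤ k - 1

/-- The `k`-domination number of the subgraph of `G` induced by `U`. -/
noncomputable def gammaK {V : Type*} (G : SimpleGraph V) (k : ℕ) (U : Set V) : ℕ :=
  sInf {n | ∃ S, IsKDomOn G k U S ∧ S.ncard = n}

/-- The `k`-independence number of the subgraph of `G` induced by `U`. -/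
noncomputable def alphaK {V : Type*} (G : SimpleGraph V) (k : ℕ) (U : Set V) : ℕ :=
  sSup {n | ∃ S, IsKIndOn G k U S ∧ S.ncard = n}

section Aux

open Set

lemma cnt_aux {V : Type*} [Finite V] {T' : SimpleGraph V} {T : SimpleGraph (V ⊕ Unit)} {v : V}
    (hll : ∀ x y, T.Adj (Sum.inl x) (Sum.inl y) ↔ T'.Adj x y)
    (hlr : ∀ x, T.Adj (Sum.inl x) (Sum.inr ()) ↔ x = v)
    (x : V) (S : Set (V ⊕ Unit)) :
    (T.neighborSet (Sum.inl x) ∩ S).ncard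
      = (T'.neighborSet x ∩ {y | Sum.inl y ∈ S}).ncard
        + (Set.indicator {z | z = v ∧ Sum.inr () ∈ S} 1 x) := by
  by_cases hc : x = v ∧ Sum.inr () ∈ S
  · have hset : T.neighborSet (Sum.inl x) ∩ S
        = (Sum.inl '' (T'.neighborSet x ∩ {y | Sum.inl y ∈ S})) ∪ {Sum.inr ()} := by
      ext w
      rcases w with y | t
      · simp [mem_neighborSet, hll]
      · cases t
        simp [mem_neighborSet, hlr, hc.1, hc.2]
    rw [hset, Set.ncard_union_eq (by simp) (Set.Finite.image _ (Set.toFinite _)) (Set.toFinite _),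
      Set.ncard_image_of_injective _ Sum.inl_injective, Set.ncard_singleton,
      Set.indicator_of_mem (by exact hc)]
    rfl
  · have hset : T.neighborSet (Sum.inl x) ∩ S
        = Sum.inl '' (T'.neighborSet x ∩ {y | Sum.inl y ∈ S}) := by
      ext w
      rcases w with y | t
      · simp [mem_neighborSet, hll]
      · cases t
        simp only [mem_inter_iff, mem_neighborSet, hlr]
        simp only [not_and] at hc
        constructor
        · rintro ⟨h1, h2⟩; exact absurd h2 (hc h1)
        · rintro ⟨z, _, h⟩; exact absurd h (by simp)
    rw [hset, Set.ncard_image_of_injective _ Sum.inl_injective,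
      Set.indicator_of_notMem (by exact hc), add_zero]

lemma cnt_le {V : Type*} [Finite V] {T' : SimpleGraph V} {T : SimpleGraph (V ⊕ Unit)} {v : V}
    (hll : ∀ x y, T.Adj (Sum.inl x) (Sum.inl y) ↔ T'.Adj x y)
    (hlr : ∀ x, T.Adj (Sum.inl x) (Sum.inr ()) ↔ x = v)
    (x : V) (S : Set (V ⊕ Unit)) :
    (T'.neighborSet x ∩ {y | Sum.inl y ∈ S}).ncard ≤ (T.neighborSet (Sum.inl x) ∩ S).ncard := by
  rw [cnt_aux hll hlr]; exact Nat.le_add_right _ _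

lemma cnt_of_ne {V : Type*} [Finite V] {T' : SimpleGraph V} {T : SimpleGraph (V ⊕ Unit)} {v : V}
    (hll : ∀ x y, T.Adj (Sum.inl x) (Sum.inl y) ↔ T'.Adj x y)
    (hlr : ∀ x, T.Adj (Sum.inl x) (Sum.inr ()) ↔ x = v)
    {x : V} (hx : x ≠ v) (S : Set (V ⊕ Unit)) :
    (T.neighborSet (Sum.inl x) ∩ S).ncard = (T'.neighborSet x ∩ {y | Sum.inl y ∈ S}).ncard := by
  rw [cnt_aux hll hlr, Set.indicator_of_notMem (fun h => hx h.1), add_zero]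

lemma pull_card {V : Type*} [Finite V] (S : Set (V ⊕ Unit)) :
    S.ncard = {y | Sum.inl y ∈ S}.ncard
      + (Set.indicator {S' : Set (V ⊕ Unit) | Sum.inr () ∈ S'} 1 S) := by
  by_cases hc : Sum.inr () ∈ S
  · have hset : S = Sum.inl '' {y | Sum.inl y ∈ S} ∪ {Sum.inr ()} := by
      ext w
      rcases w with y | t
      · simp
      · cases t; simp [hc]
    conv_lhs => rw [hset]
    rw [Set.ncard_union_eq (by simp) (Set.Finite.image _ (Set.toFinite _)) (Set.toFinite _),
      Set.ncard_image_of_injective _ Sum.inl_injective, Set.ncard_singleton,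
      Set.indicator_of_mem (by exact hc)]
    rfl
  · have hset : S = Sum.inl '' {y | Sum.inl y ∈ S} := by
      ext w
      rcases w with y | t
      · simp
      · cases t; simp [hc]
    conv_lhs => rw [hset]
    rw [Set.ncard_image_of_injective _ Sum.inl_injective,
      Set.indicator_of_notMem (by exact hc), add_zero]

lemma pull_card_mem {V : Type*} [Finite V] {S : Set (V ⊕ Unit)} (hc : Sum.inr () ∈ S) :
    S.ncard = {y | Sum.inl y ∈ S}.ncard + 1 := by
  rw [pull_card S, Set.indicator_of_mem (by exact hc)]; rfl

lemma pull_card_le {V : Type*} [Finite V] (S : Set (V ⊕ Unit)) :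
    S.ncard ≤ {y | Sum.inl y ∈ S}.ncard + 1 := by
  by_cases hc : Sum.inr () ∈ S
  · rw [pull_card_mem hc]
  · rw [pull_card S, Set.indicator_of_notMem (by exact hc)]
    omega

lemma swap_lemma {V : Type*} [Finite V] {T' : SimpleGraph V} {v w : V}
    (hNw : T'.neighborSet w = {v}) {A : Set V} (hA : IsKIndOn T' 2 Set.univ A)
    (hv : v ∈ A) (hw : w ∉ A) :
    ∃ B, IsKIndOn T' 2 Set.univ B ∧ B.ncard = A.ncard ∧ v ∉ B := by
  have hadjwv : T'.Adj w v := by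
    have : v ∈ T'.neighborSet w := by rw [hNw]; exact rfl
    exact this
  have hwv : w ≠ v := hadjwv.ne
  have hvB : v ∉ insert w (A \ {v}) := by
    simp [Ne.symm hwv]
  refine ⟨insert w (A \ {v}), ⟨Set.subset_univ _, ?_⟩, ?_, hvB⟩
  · intro x hx
    rcases Set.mem_insert_iff.mp hx with rfl | hx'
    · have : T'.neighborSet x ∩ insert x (A \ {v}) = ∅ := by
        rw [hNw]
        ext z
        simp only [Set.mem_inter_iff, Set.mem_singleton_iff, Set.mem_empty_iff_false, iff_false,
          not_and]
        rintro rfl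
        exact hvB
      rw [this]; simp
    · have hsub : T'.neighborSet x ∩ insert w (A \ {v}) ⊆ T'.neighborSet x ∩ A := by
        rintro z ⟨hz1, hz2⟩
        refine ⟨hz1, ?_⟩
        rcases Set.mem_insert_iff.mp hz2 with rfl | hz3
        · exfalso
          have : x ∈ T'.neighborSet z := hz1.symm
          rw [hNw] at this
          exact hx'.2 this
        · exact hz3.1
      exact (Set.ncard_le_ncard hsub (Set.toFinite _)).trans (hA.2 x hx'.1)
  · rw [Set.ncard_insert_of_notMem (fun h => hw h.1) (Set.toFinite _),
      Set.ncard_diff_singleton_of_mem hv]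
    have : 0 < A.ncard := Set.ncard_pos (Set.toFinite _) |>.mpr ⟨v, hv⟩
    omega

end Aux

theorem stmt7 {V : Type*} [Fintype V] (T' : SimpleGraph V) (hT' : T'.IsTree)
    (v a b : V) (hab : a ≠ b) (hva : T'.Adj v a) (hvb : T'.Adj v b)
    (hda : (T'.neighborSet a).ncard = 1) (hdb : (T'.neighborSet b).ncard = 1)
    (T : SimpleGraph (V ⊕ Unit))
    (hadj : ∀ a b, T.Adj a b ↔
      ((∃ x y, T'.Adj x y ∧ a = Sum.inl x ∧ b = Sum.inl y) ∨
       (a = Sum.inl v ∧ b = (Sum.inr () : V ⊕ Unit)) ∨ (a = (Sum.inr () : V ⊕ Unit) ∧ b = Sum.inl v))) :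
    gammaK T 2 Set.univ = gammaK T' 2 Set.univ + 1 ∧
    alphaK T 2 Set.univ = alphaK T' 2 Set.univ + 1 ∧
    (alphaK T 2 Set.univ : ℤ) - (gammaK T 2 Set.univ : ℤ) =
      (alphaK T' 2 Set.univ : ℤ) - (gammaK T' 2 Set.univ : ℤ) := by
  classical
  -- adjacency characterizations
  have hll : ∀ x y, T.Adj (Sum.inl x) (Sum.inl y) ↔ T'.Adj x y := by
    intro x y
    rw [hadj]
    constructor
    · rintro (⟨x', y', h, hx, hy⟩ | ⟨_, h⟩ | ⟨h, _⟩)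
      · cases hx; cases hy; exact h
      · exact absurd h (by simp)
      · exact absurd h (by simp)
    · intro h; exact Or.inl ⟨x, y, h, rfl, rfl⟩
  have hlr : ∀ x, T.Adj (Sum.inl x) (Sum.inr ()) ↔ x = v := by
    intro x
    rw [hadj]
    constructor
    · rintro (⟨x', y', _, _, hy⟩ | ⟨hx, _⟩ | ⟨hx, _⟩)
      · exact absurd hy (by simp)
      · cases hx; rfl
      · exact absurd hx (by simp)
    · rintro rfl; exact Or.inr (Or.inl ⟨rfl, rfl⟩)
  have hNbrU : T.neighborSet (Sum.inr ()) = {Sum.inl v} := by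
    ext w
    simp only [mem_neighborSet, Set.mem_singleton_iff, hadj]
    constructor
    · rintro (⟨x', y', _, hx, _⟩ | ⟨hx, _⟩ | ⟨_, hw⟩)
      · exact absurd hx (by simp)
      · exact absurd hx (by simp)
      · exact hw
    · rintro rfl; simp
  -- leaf neighbor sets
  have hNa : T'.neighborSet a = {v} := by
    obtain ⟨c, hc⟩ := Set.ncard_eq_one.mp hda
    have hv' : v ∈ T'.neighborSet a := hva.symm
    rw [hc] at hv' ⊢
    rw [hv']
  have hNb : T'.neighborSet b = {v} := by
    obtain ⟨c, hc⟩ := Set.ncard_eq_one.mp hdb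
    have hv' : v ∈ T'.neighborSet b := hvb.symm
    rw [hc] at hv' ⊢
    rw [hv']
  set u : V ⊕ Unit := Sum.inr () with hu
  -- ==================== domination ====================
  have leaf_in : ∀ S : Set (V ⊕ Unit), IsKDomOn T 2 Set.univ S →
      ∀ w : V, T'.neighborSet w = {v} → Sum.inl w ∈ S := by
    intro S hS w hNw
    have hadjwv : T'.Adj w v := by
      have : v ∈ T'.neighborSet w := by rw [hNw]; exact rfl
      exact this
    by_contra h
    have h2 := hS.2 (Sum.inl w) (Set.mem_univ _) h
    rw [cnt_of_ne hll hlr hadjwv.ne S, hNw] at h2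
    have h3 : (({v} : Set V) ∩ {y | Sum.inl y ∈ S}).ncard ≤ 1 :=
      (Set.ncard_le_ncard Set.inter_subset_left (Set.toFinite _)).trans (by simp)
    omega
  have u_in : ∀ S : Set (V ⊕ Unit), IsKDomOn T 2 Set.univ S → u ∈ S := by
    intro S hS
    by_contra h
    have h2 := hS.2 u (Set.mem_univ _) h
    rw [hu, hNbrU] at h2
    have h3 : (({Sum.inl v} : Set (V ⊕ Unit)) ∩ S).ncard ≤ 1 :=
      (Set.ncard_le_ncard Set.inter_subset_left (Set.toFinite _)).trans (by simp)
    omega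
  have dom_down : ∀ S : Set (V ⊕ Unit), IsKDomOn T 2 Set.univ S →
      IsKDomOn T' 2 Set.univ {y | Sum.inl y ∈ S} := by
    intro S hS
    refine ⟨Set.subset_univ _, fun x _ hx => ?_⟩
    by_cases hxv : x = v
    · subst hxv
      have hsub : ({a, b} : Set V) ⊆ T'.neighborSet x ∩ {y | Sum.inl y ∈ S} := by
        rintro z (rfl | rfl)
        · exact ⟨hva, leaf_in S hS z hNa⟩
        · exact ⟨hvb, leaf_in S hS z hNb⟩
      calc (2 : ℕ) = ({a, b} : Set V).ncard := (Set.ncard_pair hab).symm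
        _ ≤ _ := Set.ncard_le_ncard hsub (Set.toFinite _)
    · have h2 := hS.2 (Sum.inl x) (Set.mem_univ _) hx
      rw [cnt_of_ne hll hlr hxv] at h2
      exact h2
  have dom_up : ∀ S' : Set V, IsKDomOn T' 2 Set.univ S' →
      IsKDomOn T 2 Set.univ (Sum.inl '' S' ∪ {u}) := by
    intro S' hS'
    refine ⟨Set.subset_univ _, fun w _ hw => ?_⟩
    rcases w with x | t
    · have hx : x ∉ S' := fun h => hw (Set.mem_union_left _ ⟨x, h, rfl⟩)
      have h2 := hS'.2 x (Set.mem_univ _) hx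
      have hpull : {y | Sum.inl y ∈ (Sum.inl '' S' ∪ {u})} = S' := by
        ext y; simp [hu]
      calc (2 : ℕ) ≤ (T'.neighborSet x ∩ S').ncard := h2
        _ = (T'.neighborSet x ∩ {y | Sum.inl y ∈ (Sum.inl '' S' ∪ {u})}).ncard := by rw [hpull]
        _ ≤ _ := cnt_le hll hlr x _
    · cases t
      exact absurd (Set.mem_union_right _ rfl) hw
  have hDTne : {n | ∃ S, IsKDomOn T 2 Set.univ S ∧ S.ncard = n}.Nonempty :=
    ⟨_, Set.univ, ⟨subset_rfl, fun x _ hx => absurd (Set.mem_univ x) hx⟩, rfl⟩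
  have hDT'ne : {n | ∃ S, IsKDomOn T' 2 Set.univ S ∧ S.ncard = n}.Nonempty :=
    ⟨_, Set.univ, ⟨subset_rfl, fun x _ hx => absurd (Set.mem_univ x) hx⟩, rfl⟩
  obtain ⟨S0, hS0, hS0card⟩ :
      ∃ S, IsKDomOn T 2 Set.univ S ∧ S.ncard = gammaK T 2 Set.univ :=
    Nat.sInf_mem hDTne
  obtain ⟨S1, hS1, hS1card⟩ :
      ∃ S, IsKDomOn T' 2 Set.univ S ∧ S.ncard = gammaK T' 2 Set.univ :=
    Nat.sInf_mem hDT'ne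
  have hγ'le : gammaK T' 2 Set.univ ≤ {y | Sum.inl y ∈ S0}.ncard :=
    Nat.sInf_le ⟨_, dom_down S0 hS0, rfl⟩
  have hcard0 : S0.ncard = {y | Sum.inl y ∈ S0}.ncard + 1 := pull_card_mem (u_in S0 hS0)
  have hγle : gammaK T 2 Set.univ ≤ S1.ncard + 1 := by
    apply Nat.sInf_le
    refine ⟨_, dom_up S1 hS1, ?_⟩
    rw [pull_card_mem (show u ∈ Sum.inl '' S1 ∪ {u} from Set.mem_union_right _ rfl)]
    congr 1
    have : {y | Sum.inl y ∈ (Sum.inl '' S1 ∪ {u})} = S1 := by ext y; simp [hu]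
    rw [this]
  have hγ : gammaK T 2 Set.univ = gammaK T' 2 Set.univ + 1 := by omega
  -- ==================== independence ====================
  have hATne : {n | ∃ S, IsKIndOn T 2 Set.univ S ∧ S.ncard = n}.Nonempty :=
    ⟨0, ∅, ⟨Set.empty_subset _, fun x hx => absurd hx (Set.notMem_empty x)⟩, Set.ncard_empty _⟩
  have hAT'ne : {n | ∃ S, IsKIndOn T' 2 Set.univ S ∧ S.ncard = n}.Nonempty :=
    ⟨0, ∅, ⟨Set.empty_subset _, fun x hx => absurd hx (Set.notMem_empty x)⟩, Set.ncard_empty _⟩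
  have hATbdd : BddAbove {n | ∃ S, IsKIndOn T 2 Set.univ S ∧ S.ncard = n} := by
    refine ⟨Nat.card (V ⊕ Unit), ?_⟩
    rintro n ⟨S, _, rfl⟩
    exact (Set.ncard_le_ncard (Set.subset_univ S) Set.finite_univ).trans
      (le_of_eq (Set.ncard_univ _))
  have hAT'bdd : BddAbove {n | ∃ S, IsKIndOn T' 2 Set.univ S ∧ S.ncard = n} := by
    refine ⟨Nat.card V, ?_⟩
    rintro n ⟨S, _, rfl⟩
    exact (Set.ncard_le_ncard (Set.subset_univ S) Set.finite_univ).trans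
      (le_of_eq (Set.ncard_univ _))
  obtain ⟨A0, hA0, hA0card⟩ :
      ∃ S, IsKIndOn T 2 Set.univ S ∧ S.ncard = alphaK T 2 Set.univ :=
    Nat.sSup_mem hATne hATbdd
  obtain ⟨A1, hA1, hA1card⟩ :
      ∃ S, IsKIndOn T' 2 Set.univ S ∧ S.ncard = alphaK T' 2 Set.univ :=
    Nat.sSup_mem hAT'ne hAT'bdd
  have hpullind : IsKIndOn T' 2 Set.univ {y | Sum.inl y ∈ A0} := by
    refine ⟨Set.subset_univ _, fun x hx => ?_⟩
    exact (cnt_le hll hlr x A0).trans (hA0.2 (Sum.inl x) hx)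
  have hαle : alphaK T 2 Set.univ ≤ alphaK T' 2 Set.univ + 1 := by
    have h1 : {y | Sum.inl y ∈ A0}.ncard ≤ alphaK T' 2 Set.univ :=
      le_csSup hAT'bdd ⟨_, hpullind, rfl⟩
    have h2 := pull_card_le A0
    omega
  have hA2 : ∃ A2, IsKIndOn T' 2 Set.univ A2 ∧ A2.ncard = A1.ncard ∧ v ∉ A2 := by
    by_cases hv1 : v ∈ A1
    · have hnot : ¬(a ∈ A1 ∧ b ∈ A1) := by
        rintro ⟨ha1, hb1⟩
        have hsub : ({a, b} : Set V) ⊆ T'.neighborSet v ∩ A1 := by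
          rintro z (rfl | rfl)
          · exact ⟨hva, ha1⟩
          · exact ⟨hvb, hb1⟩
        have h1 := hA1.2 v hv1
        have h2 : 2 ≤ (T'.neighborSet v ∩ A1).ncard := by
          calc (2 : ℕ) = ({a, b} : Set V).ncard := (Set.ncard_pair hab).symm
            _ ≤ _ := Set.ncard_le_ncard hsub (Set.toFinite _)
        omega
      by_cases ha1 : a ∈ A1
      · exact swap_lemma hNb hA1 hv1 (fun h => hnot ⟨ha1, h⟩)
      · exact swap_lemma hNa hA1 hv1 ha1
    · exact ⟨A1, hA1, rfl, hv1⟩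
  obtain ⟨A2, hA2i, hA2card, hvA2⟩ := hA2
  have hpull3 : {y | Sum.inl y ∈ (Sum.inl '' A2 ∪ {u})} = A2 := by ext y; simp [hu]
  have hA3 : IsKIndOn T 2 Set.univ (Sum.inl '' A2 ∪ {u}) := by
    refine ⟨Set.subset_univ _, fun w hw => ?_⟩
    rcases w with x | t
    · have hx2 : x ∈ A2 := by simpa [hu] using hw
      have hxv : x ≠ v := fun h => hvA2 (h ▸ hx2)
      rw [cnt_of_ne hll hlr hxv, hpull3]
      exact hA2i.2 x hx2
    · cases t
      rw [show T.neighborSet (Sum.inr ()) ∩ (Sum.inl '' A2 ∪ {u})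
            = ({Sum.inl v} : Set (V ⊕ Unit)) ∩ (Sum.inl '' A2 ∪ {u}) from by rw [hNbrU]]
      exact (Set.ncard_le_ncard Set.inter_subset_left (Set.toFinite _)).trans (by simp)
  have hcard3 : (Sum.inl '' A2 ∪ {u}).ncard = A2.ncard + 1 := by
    rw [pull_card_mem (show u ∈ Sum.inl '' A2 ∪ {u} from Set.mem_union_right _ rfl), hpull3]
  have hαge : alphaK T' 2 Set.univ + 1 ≤ alphaK T 2 Set.univ := by
    have h1 : (Sum.inl '' A2 ∪ {u}).ncard ≤ alphaK T 2 Set.univ :=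
      le_csSup hATbdd ⟨_, hA3, rfl⟩
    omega
  have hα : alphaK T 2 Set.univ = alphaK T' 2 Set.univ + 1 := le_antisymm hαle hαge
  refine ⟨hγ, hα, ?_⟩
  rw [hγ, hα]
  push_cast
  ring
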